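/- For every natural number n, F_n = ∏_{t=1}^{n-1} (α - β ζ^t), where α = (1+√5)/2, β = (1-√5)/2, and ζ is a primitive n-th root of unity (in the complex numbers). -/

import Mathlib

open Complex in
theorem fib_eq_prod (n : ℕ) (hn : 0 < n)
    (ζ : ℂ) (hζ : ζ = Complex.exp (2 * Real.pi * Complex.I / n))
    (α β : ℂ) (hα : α = (1 + Real.sqrt 5) / 2) (hβ : β = (1 - Real.sqrt 5) / 2) :
    (Nat.fib n : ℂ) = ∏ t ∈ Finset.Icc 1 (n - 1), (α - β * ζ ^ t) := by
  have hn0 : n ≠ 0 := hn.ne'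
  have : NeZero n := ⟨hn0⟩
  have hprim : IsPrimitiveRoot ζ n := hζ ▸ Complex.isPrimitiveRoot_exp n hn0
  -- key: α^n - β^n = ∏ over nthRootsFinset
  have hkey : α ^ n - β ^ n = ∏ x ∈ Polynomial.nthRootsFinset n (1 : ℂ), (α - x * β) :=
    hprim.pow_sub_pow_eq_prod_sub_mul α β hn
  -- reindex over range n
  have hre : ∏ x ∈ Polynomial.nthRootsFinset n (1 : ℂ), (α - x * β)
      = ∏ t ∈ Finset.range n, (α - ζ ^ t * β) := by
    refine (Finset.prod_bij (fun t _ => ζ ^ t) ?_ ?_ ?_ ?_).symm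
    · intro t ht
      exact Polynomial.mem_nthRootsFinset hn 1 |>.2 (by
        rw [← pow_mul, mul_comm, pow_mul, hprim.pow_eq_one, one_pow])
    · intro i hi j hj h
      exact hprim.pow_inj (Finset.mem_range.1 hi) (Finset.mem_range.1 hj) h
    · intro x hx
      obtain ⟨i, hik, hi⟩ := hprim.eq_pow_of_pow_eq_one
        ((Polynomial.mem_nthRootsFinset hn 1).1 hx)
      exact ⟨i, Finset.mem_range.2 hik, hi⟩
    · intros; rfl
  -- split off t = 0
  have h0 : (0 : ℕ) ∈ Finset.range n := Finset.mem_range.2 hn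
  have hsplit : ∏ t ∈ Finset.range n, (α - ζ ^ t * β)
      = (α - β) * ∏ t ∈ Finset.Icc 1 (n - 1), (α - β * ζ ^ t) := by
    rw [← Finset.mul_prod_erase _ _ h0, pow_zero, one_mul]
    congr 1
    · have : (Finset.range n).erase 0 = Finset.Icc 1 (n - 1) := by
        ext t
        simp only [Finset.mem_erase, Finset.mem_range, Finset.mem_Icc]
        omega
      rw [this]
      exact Finset.prod_congr rfl (fun t _ => by ring)
  have hs5 : ((Real.sqrt 5 : ℝ) : ℂ) ≠ 0 := by
    simp only [ne_eq, Complex.ofReal_eq_zero]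
    positivity
  have hab : α - β = ((Real.sqrt 5 : ℝ) : ℂ) := by rw [hα, hβ]; ring
  -- Binet
  have hfib : (Nat.fib n : ℝ) = (Real.goldenRatio ^ n - Real.goldenConj ^ n) / Real.sqrt 5 :=
    Real.coe_fib_eq n
  have hfibC : (Nat.fib n : ℂ) * ((Real.sqrt 5 : ℝ) : ℂ) = α ^ n - β ^ n := by
    have := congrArg (fun x : ℝ => (x : ℂ)) hfib
    push_cast at this
    rw [hα, hβ]
    field_simp at this ⊢
    linear_combination this
  have hfinal : (Nat.fib n : ℂ) * ((Real.sqrt 5 : ℝ) : ℂ)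
      = ((Real.sqrt 5 : ℝ) : ℂ) * ∏ t ∈ Finset.Icc 1 (n - 1), (α - β * ζ ^ t) := by
    rw [hfibC, hkey, hre, hsplit, hab]
  exact mul_right_cancel₀ hs5 (by rw [hfinal]; ring)
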